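/- arXiv:1003.0118 — 2 statements merged into one kernel-verified Lean document; each statement's English description precedes it below -/
import Mathlib

section
/- Every vertex of a stochastic game with a reachability objective has a value; that is, for every vertex v, sup over strategies σ of player Box of inf over strategies π of player Diamond of the probability of reaching the target set T from v equals inf over π of sup over σ of the same probability. -/
open scoped Classical

/-- A stochastic game: a directed graph with a total edge relation, vertices
partitioned among player Box, player Diamond and probabilistic vertices,
the latter carrying a positive probability distribution on outgoing edges. -/
structure SGame (V : Type*) where
  edge : V → V → Prop
  total : ∀ v, ∃ u, edge v u
  isBox : V → Prop
  isDiamond : V → Prop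
  isCirc : V → Prop
  cover : ∀ v, isBox v ∨ isDiamond v ∨ isCirc v
  disjBD : ∀ v, ¬ (isBox v ∧ isDiamond v)
  disjBC : ∀ v, ¬ (isBox v ∧ isCirc v)
  disjDC : ∀ v, ¬ (isDiamond v ∧ isCirc v)
  prob : V → V → ℝ
  prob_nonneg : ∀ v u, 0 ≤ prob v u
  prob_supp : ∀ v u, isCirc v → (0 < prob v u ↔ edge v u)
  prob_sum : ∀ v, isCirc v → ∑' u, prob v u = 1

/-- A history-dependent randomized strategy for the player owning the vertices
satisfying `own`: it assigns to every history `w` and current vertex `v` owned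
by the player a probability distribution on the outgoing edges of `v`. -/
structure SGame.Strat {V : Type*} (G : SGame V) (own : V → Prop) where
  f : List V → V → V → ℝ
  nonneg : ∀ w v u, 0 ≤ f w v u
  supp : ∀ w v u, own v → f w v u ≠ 0 → G.edge v u
  sum_one : ∀ w v, own v → ∑' u, f w v u = 1

/-- One-step transition probability of the play `G(σ,π)` given history `w`. -/
noncomputable def SGame.step {V : Type*} (G : SGame V) (σ : G.Strat G.isBox)
    (π : G.Strat G.isDiamond) (w : List V) (v u : V) : ℝ :=
  if G.isBox v then σ.f w v u else if G.isDiamond v then π.f w v u else G.prob v u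

/-- Probability of reaching the target set `T` from `v` within at most `n`
transitions in the play `G(σ,π)`, given that history `w` has elapsed. -/
noncomputable def SGame.reachN {V : Type*} (G : SGame V) (σ : G.Strat G.isBox)
    (π : G.Strat G.isDiamond) (T : Set V) : ℕ → List V → V → ℝ
  | 0, _, v => if v ∈ T then 1 else 0
  | n+1, w, v => if v ∈ T then 1 else
      ∑' u, G.step σ π w v u * SGame.reachN G σ π T n (w ++ [v]) u

/-- Probability `P_v^{σ,π}(Reach(T))` of reaching `T` from `v` in the play `G(σ,π)`. -/
noncomputable def SGame.reachP {V : Type*} (G : SGame V) (σ : G.Strat G.isBox)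
    (π : G.Strat G.isDiamond) (T : Set V) (v : V) : ℝ :=
  ⨆ n, G.reachN σ π T n [] v

/-- The (lower) value `sup_σ inf_π P_v^{σ,π}(Reach(T))` of vertex `v`. -/
noncomputable def SGame.val {V : Type*} (G : SGame V) (T : Set V) (v : V) : ℝ :=
  ⨆ σ : G.Strat G.isBox, ⨅ π : G.Strat G.isDiamond, G.reachP σ π T v

/-- The Bellman operator on functions `V → [0,1]`. -/
noncomputable def SGame.bellman {V : Type*} (G : SGame V) (T : Set V)
    (f : V → ℝ) : V → ℝ := fun v =>
  if v ∈ T then 1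
  else if G.isBox v then sSup (f '' {u | G.edge v u})
  else if G.isDiamond v then sInf (f '' {u | G.edge v u})
  else ∑' u, G.prob v u * f u


namespace SGame

variable {V : Type*} (G : SGame V)

/-- default successor -/
noncomputable def succ (v : V) : V := Classical.choose (G.total v)

lemma succ_edge (v : V) : G.edge v (G.succ v) := Classical.choose_spec (G.total v)

lemma summable_of_tsum_one {f : V → ℝ} (h : ∑' u, f u = 1) : Summable f := by
  by_contra hs
  rw [tsum_eq_zero_of_not_summable hs] at h
  norm_num at h

variable {G}

/-- a Dirac strategy -/
noncomputable def diracStrat (own : V → Prop) (c : List V → V → V)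
    (hc : ∀ w v, own v → G.edge v (c w v)) : G.Strat own where
  f w v u := if u = c w v then 1 else 0
  nonneg w v u := by positivity
  supp w v u hv h := by
    by_cases hu : u = c w v
    · exact hu ▸ hc w v hv
    · simp [hu] at h
  sum_one w v _ := tsum_ite_eq (c w v) 1

noncomputable def dfltStrat (own : V → Prop) : G.Strat own :=
  diracStrat own (fun _ v => G.succ v) (fun _ v _ => G.succ_edge v)

instance (own : V → Prop) : Nonempty (G.Strat own) := ⟨dfltStrat own⟩

variable (σ : G.Strat G.isBox) (π : G.Strat G.isDiamond) (T : Set V)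

lemma step_nonneg (w : List V) (v u : V) : 0 ≤ G.step σ π w v u := by
  unfold step; split_ifs
  · exact σ.nonneg w v u
  · exact π.nonneg w v u
  · exact G.prob_nonneg v u

lemma step_sum (w : List V) (v : V) : ∑' u, G.step σ π w v u = 1 := by
  unfold step
  by_cases hb : G.isBox v
  · simpa [hb] using σ.sum_one w v hb
  by_cases hd : G.isDiamond v
  · simpa [hb, hd] using π.sum_one w v hd
  have hc : G.isCirc v := by rcases G.cover v with h | h | h <;> tauto
  simpa [hb, hd] using G.prob_sum v hc

lemma step_summable (w : List V) (v : V) : Summable (fun u => G.step σ π w v u) :=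
  summable_of_tsum_one (step_sum σ π w v)

lemma step_supp (w : List V) (v u : V) (h : G.step σ π w v u ≠ 0) : G.edge v u := by
  unfold step at h
  by_cases hb : G.isBox v
  · simp [hb] at h; exact σ.supp w v u hb h
  by_cases hd : G.isDiamond v
  · simp [hb, hd] at h; exact π.supp w v u hd h
  have hc : G.isCirc v := by rcases G.cover v with h' | h' | h' <;> tauto
  simp [hb, hd] at h
  exact (G.prob_supp v u hc).1 (lt_of_le_of_ne (G.prob_nonneg v u) (Ne.symm h))

lemma summable_step_mul (w : List V) (v : V) {h : V → ℝ} (h0 : ∀ u, 0 ≤ h u)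
    (h1 : ∀ u, h u ≤ 1) : Summable (fun u => G.step σ π w v u * h u) := by
  refine Summable.of_nonneg_of_le (fun u => mul_nonneg (step_nonneg σ π w v u) (h0 u))
    (fun u => ?_) (step_summable σ π w v)
  calc G.step σ π w v u * h u ≤ G.step σ π w v u * 1 :=
        mul_le_mul_of_nonneg_left (h1 u) (step_nonneg σ π w v u)
    _ = G.step σ π w v u := mul_one _

lemma reachN_nonneg : ∀ n w v, 0 ≤ G.reachN σ π T n w v := by
  intro n
  induction n with
  | zero => intro w v; unfold reachN; positivity
  | succ n ih =>
    intro w v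
    unfold reachN
    split_ifs
    · norm_num
    · exact tsum_nonneg fun u => mul_nonneg (step_nonneg σ π w v u) (ih _ u)

lemma reachN_le_one : ∀ n w v, G.reachN σ π T n w v ≤ 1 := by
  intro n
  induction n with
  | zero => intro w v; unfold reachN; split_ifs <;> norm_num
  | succ n ih =>
    intro w v
    unfold reachN
    split_ifs
    · exact le_refl 1
    · calc ∑' u, G.step σ π w v u * G.reachN σ π T n (w ++ [v]) u
          ≤ ∑' u, G.step σ π w v u := by
            refine Summable.tsum_le_tsum (fun u => ?_)
              (summable_step_mul σ π w v (reachN_nonneg σ π T n _) (ih _)) (step_summable σ π w v)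
            calc G.step σ π w v u * G.reachN σ π T n (w ++ [v]) u
                ≤ G.step σ π w v u * 1 :=
                  mul_le_mul_of_nonneg_left (ih _ u) (step_nonneg σ π w v u)
              _ = _ := mul_one _
        _ = 1 := step_sum σ π w v

lemma reachN_summand_summable (n : ℕ) (w : List V) (v : V) :
    Summable (fun u => G.step σ π w v u * G.reachN σ π T n (w ++ [v]) u) :=
  summable_step_mul σ π w v (reachN_nonneg σ π T n _) (reachN_le_one σ π T n _)

lemma reachN_mono : ∀ n w v, G.reachN σ π T n w v ≤ G.reachN σ π T (n+1) w v := by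
  intro n
  induction n with
  | zero =>
    intro w v
    show (if v ∈ T then (1:ℝ) else 0) ≤ _
    unfold reachN
    split_ifs
    · exact le_refl 1
    · exact tsum_nonneg fun u => mul_nonneg (step_nonneg σ π w v u) (reachN_nonneg σ π T 0 _ u)
  | succ n ih =>
    intro w v
    show (if v ∈ T then (1:ℝ) else _) ≤ (if v ∈ T then (1:ℝ) else _)
    split_ifs
    · exact le_refl 1
    · exact Summable.tsum_le_tsum
        (fun u => mul_le_mul_of_nonneg_left (ih _ u) (step_nonneg σ π w v u))
        (reachN_summand_summable σ π T n w v) (reachN_summand_summable σ π T (n+1) w v)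

lemma reachN_mono' {m n : ℕ} (h : m ≤ n) (w : List V) (v : V) :
    G.reachN σ π T m w v ≤ G.reachN σ π T n w v := by
  induction n with
  | zero => simpa [Nat.le_zero.mp h]
  | succ n ih =>
    rcases Nat.lt_or_ge m (n+1) with h' | h'
    · exact le_trans (ih (Nat.lt_succ_iff.mp h')) (reachN_mono σ π T n w v)
    · have : m = n + 1 := le_antisymm h h'
      simp [this]

lemma reachN_mem (n : ℕ) (w : List V) {v : V} (hv : v ∈ T) : G.reachN σ π T n w v = 1 := by
  cases n <;> simp [reachN, hv]

lemma reachP_nonneg (v : V) : 0 ≤ G.reachP σ π T v :=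
  le_ciSup_of_le ⟨1, by rintro x ⟨n, rfl⟩; exact reachN_le_one σ π T n [] v⟩ 0
    (reachN_nonneg σ π T 0 [] v)

lemma reachP_le_one (v : V) : G.reachP σ π T v ≤ 1 :=
  ciSup_le fun n => reachN_le_one σ π T n [] v

lemma reachN_le_reachP (n : ℕ) (v : V) : G.reachN σ π T n [] v ≤ G.reachP σ π T v :=
  le_ciSup (f := fun n => G.reachN σ π T n [] v) ⟨1, by rintro x ⟨m, rfl⟩; exact reachN_le_one σ π T m [] v⟩ n

lemma reachP_mem {v : V} (hv : v ∈ T) : G.reachP σ π T v = 1 :=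
  le_antisymm (reachP_le_one σ π T v)
    (le_trans (le_of_eq (reachN_mem σ π T 0 [] hv).symm) (reachN_le_reachP σ π T 0 v))


/-- `reachN` only depends on the strategies' behaviour along extensions of the
current history. -/
lemma reachN_congr (σ' : G.Strat G.isBox) (π' : G.Strat G.isDiamond) :
    ∀ (n : ℕ) (w : List V) (v : V),
    (∀ y, G.step σ π w v y = G.step σ' π' w v y) →
    (∀ w₂ x y, G.step σ π (w ++ v :: w₂) x y = G.step σ' π' (w ++ v :: w₂) x y) →
    G.reachN σ π T n w v = G.reachN σ' π' T n w v := by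
  intro n
  induction n with
  | zero => intro w v _ _; rfl
  | succ n ih =>
    intro w v h0 h1
    show (if v ∈ T then (1:ℝ) else _) = (if v ∈ T then (1:ℝ) else _)
    split_ifs with hv
    · rfl
    · refine tsum_congr fun u => ?_
      rw [h0 u]
      by_cases hz : G.step σ' π' w v u = 0
      · simp [hz]
      congr 1
      refine ih (w ++ [v]) u (fun y => ?_) (fun w₂ x y => ?_)
      · simpa using h1 [] u y
      · simpa using h1 (u :: w₂) x y

/-- shift of a strategy by a history prefix -/
def Strat.shift {own : V → Prop} (τ : G.Strat own) (p : List V) : G.Strat own where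
  f w := τ.f (p ++ w)
  nonneg w := τ.nonneg (p ++ w)
  supp w := τ.supp (p ++ w)
  sum_one w := τ.sum_one (p ++ w)

lemma step_shift (p w : List V) (v u : V) :
    G.step (σ.shift p) (π.shift p) w v u = G.step σ π (p ++ w) v u := rfl

lemma reachN_shift (p : List V) : ∀ (n : ℕ) (w : List V) (v : V),
    G.reachN (σ.shift p) (π.shift p) T n w v = G.reachN σ π T n (p ++ w) v := by
  intro n
  induction n with
  | zero => intro w v; rfl
  | succ n ih =>
    intro w v
    show (if v ∈ T then (1:ℝ) else _) = (if v ∈ T then (1:ℝ) else _)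
    split_ifs with hv
    · rfl
    · refine tsum_congr fun u => ?_
      rw [step_shift, ih (w ++ [v]) u, List.append_assoc]

/-- Combine an initial strategy with continuation strategies, indexed by the
vertex reached after the first step. -/
noncomputable def comb {own : V → Prop} (τ0 : G.Strat own) (h : V → G.Strat own) :
    G.Strat own where
  f w := match w with
    | [] => τ0.f []
    | _ :: w' => match w' with
      | [] => fun x => (h x).f [] x
      | u' :: _ => (h u').f w'
  nonneg w := by
    match w with
    | [] => exact τ0.nonneg []
    | _ :: [] => exact fun x => (h x).nonneg [] x
    | _ :: u' :: w'' => exact (h u').nonneg _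
  supp w := by
    match w with
    | [] => exact τ0.supp []
    | _ :: [] => exact fun x => (h x).supp [] x
    | _ :: u' :: w'' => exact (h u').supp _
  sum_one w := by
    match w with
    | [] => exact τ0.sum_one []
    | _ :: [] => exact fun x => (h x).sum_one [] x
    | _ :: u' :: w'' => exact (h u').sum_one _

lemma comb_f_nil {own : V → Prop} (τ0 : G.Strat own) (h : V → G.Strat own) :
    (comb τ0 h).f [] = τ0.f [] := rfl

/-- The key property of `comb`: after the first step from `v` to `u`, the play
under `comb τ0 h` looks like the play under `h u` from scratch. -/
lemma reachN_comb (τ0 : G.Strat G.isBox) (h : V → G.Strat G.isBox)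
    (π : G.Strat G.isDiamond) (n : ℕ) (v u : V) :
    G.reachN (comb τ0 h) π T n [v] u
      = G.reachN (h u) (π.shift [v]) T n [] u := by
  have h1 : G.reachN (comb τ0 h) π T n ([v] ++ []) u
      = G.reachN ((comb τ0 h).shift [v]) (π.shift [v]) T n [] u :=
    (reachN_shift (comb τ0 h) π T [v] n [] u).symm
  rw [show ([v] ++ [] : List V) = [v] from rfl] at h1
  rw [h1]
  refine reachN_congr _ _ T _ _ n [] u (fun y => ?_) (fun w₂ x y => ?_)
  · unfold step
    split_ifs with hb hd
    · rfl
    · rfl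
    · rfl
  · unfold step
    split_ifs with hb hd
    · show (comb τ0 h).f (v :: u :: w₂) x y = (h u).f (u :: w₂) x y
      rfl
    · rfl
    · rfl

/-- Same for Diamond combinations. -/
lemma reachN_comb' (τ0 : G.Strat G.isDiamond) (h : V → G.Strat G.isDiamond)
    (σ : G.Strat G.isBox) (n : ℕ) (v u : V) :
    G.reachN σ (comb τ0 h) T n [v] u
      = G.reachN (σ.shift [v]) (h u) T n [] u := by
  have h1 : G.reachN σ (comb τ0 h) T n ([v] ++ []) u
      = G.reachN (σ.shift [v]) ((comb τ0 h).shift [v]) T n [] u :=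
    (reachN_shift σ (comb τ0 h) T [v] n [] u).symm
  rw [show ([v] ++ [] : List V) = [v] from rfl] at h1
  rw [h1]
  refine reachN_congr _ _ T _ _ n [] u (fun y => ?_) (fun w₂ x y => ?_) <;>
    · unfold step
      split_ifs with hb hd
      · rfl
      · rfl
      · rfl


variable (G)

/-- The set of `[0,1]`-valued pre-fixed points of the Bellman operator. -/
def preFix (T : Set V) : Set (V → ℝ) :=
  {f | (∀ v, 0 ≤ f v ∧ f v ≤ 1) ∧ ∀ v, G.bellman T f v ≤ f v}

lemma one_mem_preFix (T : Set V) : (fun _ => (1:ℝ)) ∈ G.preFix T := by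
  constructor
  · exact fun v => ⟨zero_le_one, le_refl 1⟩
  · intro v
    unfold bellman
    obtain ⟨u, hu⟩ := G.total v
    split_ifs
    · exact le_refl 1
    · exact csSup_le ⟨1, ⟨u, hu, rfl⟩⟩ (by rintro x ⟨y, _, rfl⟩; exact le_refl 1)
    · exact csInf_le ⟨0, by rintro x ⟨y, _, rfl⟩; exact zero_le_one⟩ ⟨u, hu, rfl⟩
    · rename_i hb hd
      have hc : G.isCirc v := by rcases G.cover v with h' | h' | h' <;> tauto
      simp [G.prob_sum v hc]

/-- `fstar` is the pointwise infimum of all pre-fixed points. -/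
noncomputable def fstar (T : Set V) (v : V) : ℝ := ⨅ f : G.preFix T, (f : V → ℝ) v

lemma fstar_bddBelow (T : Set V) (v : V) :
    BddBelow (Set.range fun f : G.preFix T => (f : V → ℝ) v) := by
  refine ⟨0, ?_⟩
  rintro x ⟨⟨f, hf⟩, rfl⟩
  exact (hf.1 v).1

instance (T : Set V) : Nonempty (G.preFix T) := ⟨⟨_, G.one_mem_preFix T⟩⟩

lemma fstar_nonneg (T : Set V) (v : V) : 0 ≤ G.fstar T v :=
  le_ciInf fun ⟨f, hf⟩ => (hf.1 v).1

lemma fstar_le_one (T : Set V) (v : V) : G.fstar T v ≤ 1 :=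
  ciInf_le_of_le (G.fstar_bddBelow T v) ⟨_, G.one_mem_preFix T⟩ (le_refl 1)

lemma fstar_le (T : Set V) {f : V → ℝ} (hf : f ∈ G.preFix T) (v : V) :
    G.fstar T v ≤ f v :=
  ciInf_le_of_le (G.fstar_bddBelow T v) ⟨f, hf⟩ (le_refl _)

lemma bellman_mono (T : Set V) {f g : V → ℝ} (hf0 : ∀ v, 0 ≤ f v) (hg1 : ∀ v, g v ≤ 1)
    (hfg : ∀ v, f v ≤ g v) (v : V) : G.bellman T f v ≤ G.bellman T g v := by
  unfold bellman
  obtain ⟨u₀, hu₀⟩ := G.total v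
  split_ifs
  · exact le_refl 1
  · refine csSup_le ⟨f u₀, ⟨u₀, hu₀, rfl⟩⟩ ?_
    rintro x ⟨y, hy, rfl⟩
    exact le_trans (hfg y) (le_csSup ⟨1, by rintro x ⟨z, _, rfl⟩; exact hg1 z⟩ ⟨y, hy, rfl⟩)
  · refine le_csInf ⟨g u₀, ⟨u₀, hu₀, rfl⟩⟩ ?_
    rintro x ⟨y, hy, rfl⟩
    exact le_trans (csInf_le ⟨0, by rintro x ⟨z, _, rfl⟩; exact hf0 z⟩ ⟨y, hy, rfl⟩) (hfg y)
  · refine Summable.tsum_le_tsum (fun u => mul_le_mul_of_nonneg_left (hfg u) (G.prob_nonneg v u)) ?_ ?_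
    · rename_i hb hd
      have hc : G.isCirc v := by rcases G.cover v with h' | h' | h' <;> tauto
      refine Summable.of_nonneg_of_le (fun u => mul_nonneg (G.prob_nonneg v u) (hf0 u))
        (fun u => ?_) (summable_of_tsum_one (G.prob_sum v hc))
      calc G.prob v u * f u ≤ G.prob v u * g u :=
            mul_le_mul_of_nonneg_left (hfg u) (G.prob_nonneg v u)
        _ ≤ G.prob v u * 1 := mul_le_mul_of_nonneg_left (hg1 u) (G.prob_nonneg v u)
        _ = _ := mul_one _
    · rename_i hb hd
      have hc : G.isCirc v := by rcases G.cover v with h' | h' | h' <;> tauto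
      refine Summable.of_nonneg_of_le
        (fun u => mul_nonneg (G.prob_nonneg v u) (le_trans (hf0 u) (hfg u)))
        (fun u => ?_) (summable_of_tsum_one (G.prob_sum v hc))
      calc G.prob v u * g u ≤ G.prob v u * 1 :=
            mul_le_mul_of_nonneg_left (hg1 u) (G.prob_nonneg v u)
        _ = _ := mul_one _

lemma fstar_preFix (T : Set V) (v : V) : G.bellman T (G.fstar T) v ≤ G.fstar T v := by
  refine le_ciInf fun ⟨f, hf⟩ => ?_
  calc G.bellman T (G.fstar T) v ≤ G.bellman T f v :=
        G.bellman_mono T (G.fstar_nonneg T) (fun u => (hf.1 u).2)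
          (fun u => G.fstar_le T hf u) v
    _ ≤ f v := hf.2 v

lemma fstar_mem (T : Set V) {v : V} (hv : v ∈ T) : G.fstar T v = 1 := by
  refine le_antisymm (G.fstar_le_one T v) ?_
  have := G.fstar_preFix T v
  unfold bellman at this
  simpa [hv] using this

lemma fstar_box_le (T : Set V) {v u : V} (hv : v ∉ T) (hb : G.isBox v) (hvu : G.edge v u) :
    G.fstar T u ≤ G.fstar T v := by
  have := G.fstar_preFix T v
  unfold bellman at this
  rw [if_neg hv, if_pos hb] at this
  exact le_trans (le_csSup (s := G.fstar T '' {u | G.edge v u})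
    ⟨1, by rintro x ⟨z, _, rfl⟩; exact G.fstar_le_one T z⟩ ⟨u, hvu, rfl⟩) this

lemma fstar_diamond_exists (T : Set V) {v : V} (hd : G.isDiamond v) {δ : ℝ} (hδ : 0 < δ) :
    ∃ u, G.edge v u ∧ G.fstar T u ≤ G.fstar T v + δ := by
  obtain ⟨u₀, hu₀⟩ := G.total v
  have hinf : sInf (G.fstar T '' {u | G.edge v u}) ≤ G.fstar T v := by
    by_cases hv : v ∈ T
    · exact le_trans (csInf_le ⟨0, by rintro x ⟨z, _, rfl⟩; exact G.fstar_nonneg T z⟩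
        ⟨u₀, hu₀, rfl⟩) (le_trans (G.fstar_le_one T u₀) (le_of_eq (G.fstar_mem T hv).symm))
    · have := G.fstar_preFix T v
      unfold bellman at this
      rw [if_neg hv, if_neg (fun hb => G.disjBD v ⟨hb, hd⟩), if_pos hd] at this
      exact this
  have : sInf (G.fstar T '' {u | G.edge v u}) < G.fstar T v + δ :=
    lt_of_le_of_lt hinf (by linarith)
  obtain ⟨x, ⟨u, hu, rfl⟩, hx⟩ := exists_lt_of_csInf_lt
    (⟨G.fstar T u₀, ⟨u₀, hu₀, rfl⟩⟩ : (G.fstar T '' {u | G.edge v u}).Nonempty) this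
  exact ⟨u, hu, le_of_lt hx⟩

lemma fstar_circ_le (T : Set V) {v : V} (hv : v ∉ T) (hc : G.isCirc v) :
    ∑' u, G.prob v u * G.fstar T u ≤ G.fstar T v := by
  have := G.fstar_preFix T v
  unfold bellman at this
  rw [if_neg hv, if_neg (fun hb => G.disjBC v ⟨hb, hc⟩),
    if_neg (fun hd => G.disjDC v ⟨hd, hc⟩)] at this
  exact this


lemma pick_spec (T : Set V) {ε : ℝ} (hε : 0 < ε) (x : V) (k : ℕ) :
    ∃ u, G.edge x u ∧ (G.isDiamond x → G.fstar T u ≤ G.fstar T x + ε * (1/2)^(k+1)) := by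
  by_cases hd : G.isDiamond x
  · obtain ⟨u, hu, hle⟩ := G.fstar_diamond_exists T hd (δ := ε * (1/2)^(k+1)) (by positivity)
    exact ⟨u, hu, fun _ => hle⟩
  · obtain ⟨u, hu⟩ := G.total x
    exact ⟨u, hu, fun h => absurd h hd⟩

noncomputable def piStar (T : Set V) {ε : ℝ} (hε : 0 < ε) : G.Strat G.isDiamond :=
  diracStrat G.isDiamond (fun w x => Classical.choose (G.pick_spec T hε x w.length))
    (fun w x _ => (Classical.choose_spec (G.pick_spec T hε x w.length)).1)

variable {G}

lemma reachN_le_fstar (σ : G.Strat G.isBox) (T : Set V) {ε : ℝ} (hε : 0 < ε) :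
    ∀ (n : ℕ) (w : List V) (v : V),
    G.reachN σ (G.piStar T hε) T n w v ≤ G.fstar T v + ε * (1/2)^w.length := by
  intro n
  have hpow : ∀ k : ℕ, (0:ℝ) < ε * (1/2)^k := fun k => by positivity
  induction n with
  | zero =>
    intro w v
    show (if v ∈ T then (1:ℝ) else 0) ≤ _
    split_ifs with hv
    · rw [G.fstar_mem T hv]; linarith [hpow w.length]
    · linarith [G.fstar_nonneg T v, hpow w.length]
  | succ n ih =>
    intro w v
    show (if v ∈ T then (1:ℝ) else _) ≤ _
    split_ifs with hv
    · rw [G.fstar_mem T hv]; linarith [hpow w.length]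
    set π := G.piStar T hε
    set c : ℝ := ε * (1/2)^(w.length + 1) with hc
    have hlen : (w ++ [v]).length = w.length + 1 := by simp
    have ihb : ∀ u, G.reachN σ π T n (w ++ [v]) u ≤ G.fstar T u + c := by
      intro u; rw [hc, ← hlen]; exact ih (w ++ [v]) u
    have hcc : c + c = ε * (1/2)^w.length := by rw [hc]; ring
    have hcpos : 0 < c := hpow _
    have hr0 : ∀ u, 0 ≤ G.reachN σ π T n (w ++ [v]) u := G.reachN_nonneg σ π T n _
    have hr1 : ∀ u, G.reachN σ π T n (w ++ [v]) u ≤ 1 := G.reachN_le_one σ π T n _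
    rcases G.cover v with hb | hd | hcirc
    · -- Box vertex
      have hstep : ∀ u, G.step σ π w v u = σ.f w v u := fun u => by
        unfold step; rw [if_pos hb]
      have hσs : Summable (σ.f w v) := summable_of_tsum_one (σ.sum_one w v hb)
      set M := sSup (G.fstar T '' {u | G.edge v u}) with hM
      have hMle : M ≤ G.fstar T v := by
        have := G.fstar_preFix T v
        unfold bellman at this
        rwa [if_neg hv, if_pos hb] at this
      have h1 : ∑' u, G.step σ π w v u * G.reachN σ π T n (w ++ [v]) u
          ≤ ∑' u, σ.f w v u * (G.fstar T u + c) := by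
        refine Summable.tsum_le_tsum (fun u => ?_) (G.reachN_summand_summable σ π T n w v) ?_
        · rw [hstep u]
          exact mul_le_mul_of_nonneg_left (ihb u) (σ.nonneg w v u)
        · refine Summable.of_nonneg_of_le
            (fun u => mul_nonneg (σ.nonneg w v u) (by linarith [G.fstar_nonneg T u]))
            (fun u => ?_) (hσs.mul_right (1 + c))
          exact mul_le_mul_of_nonneg_left (by linarith [G.fstar_le_one T u]) (σ.nonneg w v u)
      have hsum1 : Summable (fun u => σ.f w v u * G.fstar T u) := by
        refine Summable.of_nonneg_of_le
          (fun u => mul_nonneg (σ.nonneg w v u) (G.fstar_nonneg T u)) (fun u => ?_) hσs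
        calc σ.f w v u * G.fstar T u ≤ σ.f w v u * 1 :=
              mul_le_mul_of_nonneg_left (G.fstar_le_one T u) (σ.nonneg w v u)
          _ = _ := mul_one _
      have h2 : ∑' u, σ.f w v u * (G.fstar T u + c)
          = (∑' u, σ.f w v u * G.fstar T u) + c := by
        have : ∀ u, σ.f w v u * (G.fstar T u + c)
            = σ.f w v u * G.fstar T u + σ.f w v u * c := fun u => by ring
        rw [tsum_congr this, Summable.tsum_add hsum1 (hσs.mul_right c), tsum_mul_right,
          σ.sum_one w v hb, one_mul]
      have h3 : ∑' u, σ.f w v u * G.fstar T u ≤ M := by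
        have hMb : BddAbove (G.fstar T '' {u | G.edge v u}) :=
          ⟨1, by rintro x ⟨z, _, rfl⟩; exact G.fstar_le_one T z⟩
        have : ∑' u, σ.f w v u * G.fstar T u ≤ ∑' u, σ.f w v u * M := by
          refine Summable.tsum_le_tsum (fun u => ?_) hsum1 (hσs.mul_right M)
          by_cases h0 : σ.f w v u = 0
          · simp [h0]
          · exact mul_le_mul_of_nonneg_left
              (le_csSup hMb ⟨u, σ.supp w v u hb h0, rfl⟩) (σ.nonneg w v u)
        rwa [tsum_mul_right, σ.sum_one w v hb, one_mul] at this
      calc _ ≤ (∑' u, σ.f w v u * G.fstar T u) + c := by rw [← h2]; exact h1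
        _ ≤ M + c := by linarith
        _ ≤ G.fstar T v + ε * (1/2)^w.length := by
            rw [← hcc]; linarith
    · -- Diamond vertex
      set u₀ := Classical.choose (G.pick_spec T hε v w.length) with hu₀
      have hspec := Classical.choose_spec (G.pick_spec T hε v w.length)
      have hstep : ∀ u, G.step σ π w v u = if u = u₀ then 1 else 0 := fun u => by
        unfold step
        rw [if_neg (fun hb => G.disjBD v ⟨hb, hd⟩), if_pos hd]
        rfl
      have h1 : ∑' u, G.step σ π w v u * G.reachN σ π T n (w ++ [v]) u
          = G.reachN σ π T n (w ++ [v]) u₀ := by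
        rw [tsum_congr (fun u => by rw [hstep u])]
        rw [tsum_eq_single u₀ (fun u h => by simp [h])]
        simp
      rw [h1]
      have := hspec.2 hd
      calc G.reachN σ π T n (w ++ [v]) u₀ ≤ G.fstar T u₀ + c := ihb u₀
        _ ≤ (G.fstar T v + c) + c := by
            rw [hc]; exact add_le_add_left this c
        _ = G.fstar T v + ε * (1/2)^w.length := by rw [add_assoc, hcc]
    · -- Circle vertex
      have hstep : ∀ u, G.step σ π w v u = G.prob v u := fun u => by
        unfold step
        rw [if_neg (fun hb => G.disjBC v ⟨hb, hcirc⟩),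
          if_neg (fun hd => G.disjDC v ⟨hd, hcirc⟩)]
      have hps : Summable (G.prob v) := summable_of_tsum_one (G.prob_sum v hcirc)
      have hsum1 : Summable (fun u => G.prob v u * G.fstar T u) := by
        refine Summable.of_nonneg_of_le
          (fun u => mul_nonneg (G.prob_nonneg v u) (G.fstar_nonneg T u)) (fun u => ?_) hps
        calc G.prob v u * G.fstar T u ≤ G.prob v u * 1 :=
              mul_le_mul_of_nonneg_left (G.fstar_le_one T u) (G.prob_nonneg v u)
          _ = _ := mul_one _
      have h1 : ∑' u, G.step σ π w v u * G.reachN σ π T n (w ++ [v]) u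
          ≤ ∑' u, G.prob v u * (G.fstar T u + c) := by
        refine Summable.tsum_le_tsum (fun u => ?_) (G.reachN_summand_summable σ π T n w v) ?_
        · rw [hstep u]
          exact mul_le_mul_of_nonneg_left (ihb u) (G.prob_nonneg v u)
        · refine Summable.of_nonneg_of_le
            (fun u => mul_nonneg (G.prob_nonneg v u) (by linarith [G.fstar_nonneg T u]))
            (fun u => ?_) (hps.mul_right (1 + c))
          exact mul_le_mul_of_nonneg_left (by linarith [G.fstar_le_one T u]) (G.prob_nonneg v u)
      have h2 : ∑' u, G.prob v u * (G.fstar T u + c)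
          = (∑' u, G.prob v u * G.fstar T u) + c := by
        have : ∀ u, G.prob v u * (G.fstar T u + c)
            = G.prob v u * G.fstar T u + G.prob v u * c := fun u => by ring
        rw [tsum_congr this, Summable.tsum_add hsum1 (hps.mul_right c), tsum_mul_right,
          G.prob_sum v hcirc, one_mul]
      have h3 := G.fstar_circ_le T hv hcirc
      calc _ ≤ (∑' u, G.prob v u * G.fstar T u) + c := by rw [← h2]; exact h1
        _ ≤ G.fstar T v + c := by linarith
        _ ≤ G.fstar T v + ε * (1/2)^w.length := by
            have : c ≤ ε * (1/2)^w.length := by rw [← hcc]; linarith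
            linarith

/-- Direction (A): the upper value is at most `fstar`. -/
lemma infsup_le_fstar (T : Set V) (v : V) :
    (⨅ π : G.Strat G.isDiamond, ⨆ σ : G.Strat G.isBox, G.reachP σ π T v)
      ≤ G.fstar T v := by
  refine le_of_forall_pos_le_add fun ε hε => ?_
  have hbdd : BddBelow (Set.range fun π : G.Strat G.isDiamond =>
      ⨆ σ : G.Strat G.isBox, G.reachP σ π T v) := by
    refine ⟨0, ?_⟩
    rintro x ⟨π, rfl⟩
    exact le_ciSup_of_le ⟨1, by rintro x ⟨σ, rfl⟩; exact G.reachP_le_one σ π T v⟩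
      (dfltStrat G.isBox) (G.reachP_nonneg _ π T v)
  refine ciInf_le_of_le hbdd (G.piStar T hε) (ciSup_le fun σ => ?_)
  refine ciSup_le fun n => ?_
  have := reachN_le_fstar σ T hε n [] v
  simpa using this

/-- Monotone convergence inequality for `tsum` against subprobability weights. -/
lemma mono_conv {a : V → ℝ} {r : ℕ → V → ℝ} (ha0 : ∀ u, 0 ≤ a u) (hsa : Summable a)
    (ha1 : ∑' u, a u ≤ 1) (hmono : ∀ u, Monotone fun n => r n u)
    (hr0 : ∀ n u, 0 ≤ r n u) (hr1 : ∀ n u, r n u ≤ 1) :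
    ∑' u, a u * (⨆ n, r n u) ≤ ⨆ n, ∑' u, a u * r n u := by
  set s : V → ℝ := fun u => ⨆ n, r n u with hs
  have hbddr : ∀ u, BddAbove (Set.range fun n => r n u) :=
    fun u => ⟨1, by rintro x ⟨n, rfl⟩; exact hr1 n u⟩
  have hs0 : ∀ u, 0 ≤ s u := fun u => le_ciSup_of_le (hbddr u) 0 (hr0 0 u)
  have hs1 : ∀ u, s u ≤ 1 := fun u => ciSup_le fun n => hr1 n u
  have hsummand : ∀ n, Summable (fun u => a u * r n u) := fun n =>
    Summable.of_nonneg_of_le (fun u => mul_nonneg (ha0 u) (hr0 n u))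
      (fun u => by calc a u * r n u ≤ a u * 1 := mul_le_mul_of_nonneg_left (hr1 n u) (ha0 u)
                     _ = a u := mul_one _) hsa
  set X := ⨆ n, ∑' u, a u * r n u with hX
  have hXbdd : BddAbove (Set.range fun n => ∑' u, a u * r n u) := by
    refine ⟨1, ?_⟩
    rintro x ⟨n, rfl⟩
    calc ∑' u, a u * r n u ≤ ∑' u, a u := by
          refine Summable.tsum_le_tsum (fun u => ?_) (hsummand n) hsa
          calc a u * r n u ≤ a u * 1 := mul_le_mul_of_nonneg_left (hr1 n u) (ha0 u)
            _ = a u := mul_one _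
      _ ≤ 1 := ha1
  have hsmul : Summable (fun u => a u * s u) :=
    Summable.of_nonneg_of_le (fun u => mul_nonneg (ha0 u) (hs0 u))
      (fun u => by calc a u * s u ≤ a u * 1 := mul_le_mul_of_nonneg_left (hs1 u) (ha0 u)
                     _ = a u := mul_one _) hsa
  refine Summable.tsum_le_of_sum_le hsmul fun F => ?_
  refine le_of_forall_pos_le_add fun δ hδ => ?_
  have hex : ∀ u, ∃ n, s u ≤ r n u + δ := by
    intro u
    obtain ⟨n, hn⟩ := exists_lt_of_lt_ciSup (f := fun n => r n u)
      (show s u - δ < ⨆ n, r n u from by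
        have : s u - δ < s u := by linarith
        exact this)
    exact ⟨n, by linarith⟩
  choose nu hnu using hex
  set N := F.sup nu with hN
  have hRN : ∀ u ∈ F, s u ≤ r N u + δ := fun u hu =>
    le_trans (hnu u) (add_le_add_left (hmono u (Finset.le_sup (f := nu) hu)) δ)
  calc ∑ u ∈ F, a u * s u ≤ ∑ u ∈ F, (a u * r N u + a u * δ) := by
        refine Finset.sum_le_sum fun u hu => ?_
        calc a u * s u ≤ a u * (r N u + δ) :=
              mul_le_mul_of_nonneg_left (hRN u hu) (ha0 u)
          _ = a u * r N u + a u * δ := by ring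
    _ = (∑ u ∈ F, a u * r N u) + (∑ u ∈ F, a u) * δ := by
        rw [Finset.sum_add_distrib, Finset.sum_mul]
    _ ≤ (∑' u, a u * r N u) + 1 * δ := by
        refine add_le_add (Summable.sum_le_tsum F (fun u _ => mul_nonneg (ha0 u) (hr0 N u)) (hsummand N))
          (mul_le_mul_of_nonneg_right ?_ (le_of_lt hδ))
        exact le_trans (Summable.sum_le_tsum F (fun u _ => ha0 u) hsa) ha1
    _ ≤ X + δ := by
        rw [one_mul]
        exact add_le_add_left (le_ciSup hXbdd N) δ

variable (G)

/-- The value guaranteed by the Box strategy `σ`. -/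
noncomputable def low (σ : G.Strat G.isBox) (T : Set V) (v : V) : ℝ :=
  ⨅ π : G.Strat G.isDiamond, G.reachP σ π T v

variable {G}

lemma reachP_bddBelow (σ : G.Strat G.isBox) (T : Set V) (v : V) :
    BddBelow (Set.range fun π : G.Strat G.isDiamond => G.reachP σ π T v) :=
  ⟨0, by rintro x ⟨π, rfl⟩; exact G.reachP_nonneg σ π T v⟩

lemma low_nonneg (σ : G.Strat G.isBox) (T : Set V) (v : V) : 0 ≤ G.low σ T v :=
  le_ciInf fun π => G.reachP_nonneg σ π T v

lemma low_le_one (σ : G.Strat G.isBox) (T : Set V) (v : V) : G.low σ T v ≤ 1 :=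
  ciInf_le_of_le (reachP_bddBelow σ T v) (dfltStrat G.isDiamond)
    (G.reachP_le_one σ _ T v)

lemma low_le_reachP (σ : G.Strat G.isBox) (π : G.Strat G.isDiamond) (T : Set V) (v : V) :
    G.low σ T v ≤ G.reachP σ π T v :=
  ciInf_le (reachP_bddBelow σ T v) π

lemma low_bddAbove (T : Set V) (v : V) :
    BddAbove (Set.range fun σ : G.Strat G.isBox => G.low σ T v) :=
  ⟨1, by rintro x ⟨σ, rfl⟩; exact low_le_one σ T v⟩

lemma low_le_val (σ : G.Strat G.isBox) (T : Set V) (v : V) : G.low σ T v ≤ G.val T v :=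
  le_ciSup (low_bddAbove T v) σ

lemma val_nonneg (T : Set V) (v : V) : 0 ≤ G.val T v :=
  le_trans (low_nonneg (dfltStrat G.isBox) T v) (low_le_val _ T v)

lemma val_le_one (T : Set V) (v : V) : G.val T v ≤ 1 :=
  ciSup_le fun σ => low_le_one σ T v

lemma val_mem (T : Set V) {v : V} (hv : v ∈ T) : G.val T v = 1 := by
  refine le_antisymm (val_le_one T v) ?_
  refine le_trans ?_ (low_le_val (dfltStrat G.isBox) T v)
  exact le_ciInf fun π => le_of_eq (G.reachP_mem _ π T hv).symm

lemma exists_low_near (T : Set V) (v : V) {δ : ℝ} (hδ : 0 < δ) :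
    ∃ σ : G.Strat G.isBox, G.val T v - δ < G.low σ T v := by
  have : G.val T v - δ < ⨆ σ : G.Strat G.isBox, G.low σ T v := by
    show _ < G.val T v
    linarith
  exact exists_lt_of_lt_ciSup this

/-- The reach probability under a `comb` strategy dominates the continuations. -/
lemma reachP_comb_ge (τ0 : G.Strat G.isBox) (h : V → G.Strat G.isBox)
    (π : G.Strat G.isDiamond) (T : Set V) {v : V} (hv : v ∉ T) (n : ℕ) :
    G.reachN (comb τ0 h) π T (n+1) [] v
      = ∑' u, G.step (comb τ0 h) π [] v u
          * G.reachN (h u) (π.shift [v]) T n [] u := by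
  show (if v ∈ T then (1:ℝ) else _) = _
  rw [if_neg hv]
  refine tsum_congr fun u => ?_
  have h1 : G.reachN (comb τ0 h) π T n ([] ++ [v]) u
      = G.reachN (h u) (π.shift [v]) T n [] u := reachN_comb T τ0 h π n v u
  rw [h1]

lemma bellman_val_box (T : Set V) {v u : V} (hv : v ∉ T) (hb : G.isBox v)
    (hvu : G.edge v u) : G.val T u ≤ G.val T v := by
  refine le_of_forall_pos_le_add fun δ hδ => ?_
  obtain ⟨σ₀, hσ₀⟩ := exists_low_near T u hδ
  have hedge : ∀ (w : List V) (x : V), G.isBox x → G.edge x (if x = v then u else G.succ x) := by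
    intro w x _
    split_ifs with hx
    · exact hx ▸ hvu
    · exact G.succ_edge x
  set τ0 : G.Strat G.isBox := diracStrat G.isBox (fun _ x => if x = v then u else G.succ x) hedge
  set σc : G.Strat G.isBox := comb τ0 (fun _ => σ₀) with hσc
  have key : ∀ π : G.Strat G.isDiamond, ∀ n,
      G.reachN σc π T (n+1) [] v = G.reachN σ₀ (π.shift [v]) T n [] u := by
    intro π n
    rw [reachP_comb_ge τ0 (fun _ => σ₀) π T hv n]
    have hstep : ∀ y, G.step σc π [] v y = if y = u then 1 else 0 := by
      intro y
      show (if G.isBox v then τ0.f [] v y else _) = _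
      rw [if_pos hb]
      show (if y = (if v = v then u else G.succ v) then (1:ℝ) else 0) = _
      rw [if_pos rfl]
    rw [tsum_congr (fun y => by rw [hstep y])]
    rw [tsum_eq_single u (fun y hy => by simp [hy])]
    simp
  have hlow : ∀ π : G.Strat G.isDiamond, G.low σ₀ T u ≤ G.reachP σc π T v := by
    intro π
    refine le_trans (low_le_reachP σ₀ (π.shift [v]) T u) ?_
    refine ciSup_le fun n => ?_
    rw [← key π n]
    exact G.reachN_le_reachP σc π T (n+1) v
  have : G.low σ₀ T u ≤ G.low σc T v := le_ciInf hlow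
  have := le_trans this (low_le_val σc T v)
  linarith

lemma bellman_val_diamond (T : Set V) {v : V} (hv : v ∉ T) (hd : G.isDiamond v) :
    sInf (G.val T '' {u | G.edge v u}) ≤ G.val T v := by
  obtain ⟨u₀, hu₀⟩ := G.total v
  have hIbdd : BddBelow (G.val T '' {u | G.edge v u}) :=
    ⟨0, by rintro x ⟨z, _, rfl⟩; exact val_nonneg T z⟩
  set I := sInf (G.val T '' {u | G.edge v u}) with hI
  refine le_of_forall_pos_le_add fun δ hδ => ?_
  have hex : ∀ y, ∃ σy : G.Strat G.isBox, G.edge v y → G.val T y - δ < G.low σy T y := by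
    intro y
    by_cases hy : G.edge v y
    · obtain ⟨σy, hσy⟩ := exists_low_near T y hδ
      exact ⟨σy, fun _ => hσy⟩
    · exact ⟨dfltStrat G.isBox, fun h => absurd h hy⟩
  choose σs hσs using hex
  set σc : G.Strat G.isBox := comb (dfltStrat G.isBox) σs with hσc
  have key : ∀ π : G.Strat G.isDiamond, I - δ ≤ G.reachP σc π T v := by
    intro π
    set r : ℕ → V → ℝ := fun n y => G.reachN (σs y) (π.shift [v]) T n [] y with hr
    have hstep : ∀ y, G.step σc π [] v y = π.f [] v y := by
      intro y
      show (if G.isBox v then _ else if G.isDiamond v then π.f [] v y else _) = _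
      rw [if_neg (fun hb => G.disjBD v ⟨hb, hd⟩), if_pos hd]
    have hrn : ∀ n, G.reachN σc π T (n+1) [] v = ∑' y, π.f [] v y * r n y := by
      intro n
      rw [reachP_comb_ge (dfltStrat G.isBox) σs π T hv n]
      exact tsum_congr fun y => by rw [hstep y]
    have hπs : Summable (π.f [] v) := summable_of_tsum_one (π.sum_one [] v hd)
    have h1 : ∑' y, π.f [] v y * (⨆ n, r n y) ≤ ⨆ n, ∑' y, π.f [] v y * r n y :=
      mono_conv (π.nonneg [] v) hπs (le_of_eq (π.sum_one [] v hd))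
        (fun y => monotone_nat_of_le_succ fun n => G.reachN_mono (σs y) _ T n [] y)
        (fun n y => G.reachN_nonneg (σs y) _ T n [] y)
        (fun n y => G.reachN_le_one (σs y) _ T n [] y)
    have h2 : (⨆ n, ∑' y, π.f [] v y * r n y) ≤ G.reachP σc π T v := by
      refine ciSup_le fun n => ?_
      rw [← hrn n]
      exact G.reachN_le_reachP σc π T (n+1) v
    have h3 : ∀ y, ⨆ n, r n y = G.reachP (σs y) (π.shift [v]) T y := fun y => rfl
    have h4 : I - δ ≤ ∑' y, π.f [] v y * (⨆ n, r n y) := by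
      have hterm : ∀ y, π.f [] v y * (I - δ) ≤ π.f [] v y * (⨆ n, r n y) := by
        intro y
        by_cases h0 : π.f [] v y = 0
        · simp [h0]
        · refine mul_le_mul_of_nonneg_left ?_ (π.nonneg [] v y)
          have hy : G.edge v y := π.supp [] v y hd h0
          have : I ≤ G.val T y := csInf_le hIbdd ⟨y, hy, rfl⟩
          have h5 : G.val T y - δ ≤ G.low (σs y) T y := le_of_lt (hσs y hy)
          have h6 : G.low (σs y) T y ≤ G.reachP (σs y) (π.shift [v]) T y :=
            low_le_reachP _ _ T y
          rw [h3 y]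
          linarith
      have hsum2 : Summable (fun y => π.f [] v y * (⨆ n, r n y)) := by
        refine Summable.of_nonneg_of_le (fun y => mul_nonneg (π.nonneg [] v y) ?_)
          (fun y => ?_) hπs
        · rw [h3 y]; exact G.reachP_nonneg _ _ T y
        · have hb1 : (⨆ n, r n y) ≤ 1 := by rw [h3 y]; exact G.reachP_le_one _ _ T y
          have := mul_le_mul_of_nonneg_left hb1 (π.nonneg [] v y)
          rw [mul_one] at this
          exact this
      have := Summable.tsum_le_tsum hterm (hπs.mul_right (I - δ)) hsum2
      rwa [tsum_mul_right, π.sum_one [] v hd, one_mul] at this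
    linarith
  have : I - δ ≤ G.low σc T v := le_ciInf key
  have := le_trans this (low_le_val σc T v)
  linarith

lemma bellman_val_circ (T : Set V) {v : V} (hv : v ∉ T) (hc : G.isCirc v) :
    ∑' u, G.prob v u * G.val T u ≤ G.val T v := by
  have hps : Summable (G.prob v) := summable_of_tsum_one (G.prob_sum v hc)
  have hsumv : Summable (fun y => G.prob v y * G.val T y) := by
    refine Summable.of_nonneg_of_le (fun y => mul_nonneg (G.prob_nonneg v y) (val_nonneg T y))
      (fun y => ?_) hps
    calc G.prob v y * G.val T y ≤ G.prob v y * 1 :=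
          mul_le_mul_of_nonneg_left (val_le_one T y) (G.prob_nonneg v y)
      _ = _ := mul_one _
  refine le_of_forall_pos_le_add fun δ hδ => ?_
  have hex : ∀ y, ∃ σy : G.Strat G.isBox, G.edge v y → G.val T y - δ < G.low σy T y := by
    intro y
    by_cases hy : G.edge v y
    · obtain ⟨σy, hσy⟩ := exists_low_near T y hδ
      exact ⟨σy, fun _ => hσy⟩
    · exact ⟨dfltStrat G.isBox, fun h => absurd h hy⟩
  choose σs hσs using hex
  set σc : G.Strat G.isBox := comb (dfltStrat G.isBox) σs with hσc
  have hprob0 : ∀ y, ¬ G.edge v y → G.prob v y = 0 := by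
    intro y hy
    by_contra h0
    exact hy ((G.prob_supp v y hc).1 (lt_of_le_of_ne (G.prob_nonneg v y) (Ne.symm h0)))
  have key : ∀ π : G.Strat G.isDiamond,
      (∑' y, G.prob v y * G.val T y) - δ ≤ G.reachP σc π T v := by
    intro π
    set r : ℕ → V → ℝ := fun n y => G.reachN (σs y) (π.shift [v]) T n [] y with hr
    have hstep : ∀ y, G.step σc π [] v y = G.prob v y := by
      intro y
      show (if G.isBox v then _ else if G.isDiamond v then _ else G.prob v y) = _
      rw [if_neg (fun hb => G.disjBC v ⟨hb, hc⟩), if_neg (fun hd => G.disjDC v ⟨hd, hc⟩)]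
    have hrn : ∀ n, G.reachN σc π T (n+1) [] v = ∑' y, G.prob v y * r n y := by
      intro n
      rw [reachP_comb_ge (dfltStrat G.isBox) σs π T hv n]
      exact tsum_congr fun y => by rw [hstep y]
    have h1 : ∑' y, G.prob v y * (⨆ n, r n y) ≤ ⨆ n, ∑' y, G.prob v y * r n y :=
      mono_conv (G.prob_nonneg v) hps (le_of_eq (G.prob_sum v hc))
        (fun y => monotone_nat_of_le_succ fun n => G.reachN_mono (σs y) _ T n [] y)
        (fun n y => G.reachN_nonneg (σs y) _ T n [] y)
        (fun n y => G.reachN_le_one (σs y) _ T n [] y)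
    have h2 : (⨆ n, ∑' y, G.prob v y * r n y) ≤ G.reachP σc π T v := by
      refine ciSup_le fun n => ?_
      rw [← hrn n]
      exact G.reachN_le_reachP σc π T (n+1) v
    have h3 : ∀ y, ⨆ n, r n y = G.reachP (σs y) (π.shift [v]) T y := fun y => rfl
    have h4 : (∑' y, G.prob v y * G.val T y) - δ ≤ ∑' y, G.prob v y * (⨆ n, r n y) := by
      have hterm : ∀ y, G.prob v y * G.val T y - G.prob v y * δ
          ≤ G.prob v y * (⨆ n, r n y) := by
        intro y
        by_cases hy : G.edge v y
        · have h5 : G.val T y - δ ≤ G.low (σs y) T y := le_of_lt (hσs y hy)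
          have h6 : G.low (σs y) T y ≤ G.reachP (σs y) (π.shift [v]) T y :=
            low_le_reachP _ _ T y
          have h7 : G.val T y - δ ≤ ⨆ n, r n y := by rw [h3 y]; linarith
          have h8 := mul_le_mul_of_nonneg_left h7 (G.prob_nonneg v y)
          have h9 : G.prob v y * (G.val T y - δ)
              = G.prob v y * G.val T y - G.prob v y * δ := by ring
          linarith
        · rw [hprob0 y hy]
          simp
      have hsum2 : Summable (fun y => G.prob v y * (⨆ n, r n y)) := by
        refine Summable.of_nonneg_of_le (fun y => mul_nonneg (G.prob_nonneg v y) ?_)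
          (fun y => ?_) hps
        · rw [h3 y]; exact G.reachP_nonneg _ _ T y
        · have hb1 : (⨆ n, r n y) ≤ 1 := by rw [h3 y]; exact G.reachP_le_one _ _ T y
          have := mul_le_mul_of_nonneg_left hb1 (G.prob_nonneg v y)
          rw [mul_one] at this
          exact this
      have hsum3 : Summable (fun y => G.prob v y * G.val T y - G.prob v y * δ) :=
        hsumv.sub (hps.mul_right δ)
      have := Summable.tsum_le_tsum hterm hsum3 hsum2
      rw [Summable.tsum_sub hsumv (hps.mul_right δ), tsum_mul_right, G.prob_sum v hc, one_mul] at this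
      linarith
    linarith
  have : (∑' y, G.prob v y * G.val T y) - δ ≤ G.low σc T v := le_ciInf key
  have := le_trans this (low_le_val σc T v)
  linarith

lemma val_preFix (T : Set V) : G.val T ∈ G.preFix T := by
  refine ⟨fun v => ⟨val_nonneg T v, val_le_one T v⟩, fun v => ?_⟩
  unfold bellman
  split_ifs with hv hb hd
  · exact le_of_eq (val_mem T hv).symm
  · refine csSup_le ?_ ?_
    · obtain ⟨u, hu⟩ := G.total v
      exact ⟨G.val T u, ⟨u, hu, rfl⟩⟩
    · rintro x ⟨u, hu, rfl⟩
      exact bellman_val_box T hv hb hu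
  · exact bellman_val_diamond T hv hd
  · have hc : G.isCirc v := by rcases G.cover v with h' | h' | h' <;> tauto
    exact bellman_val_circ T hv hc

end SGame

/-- Every vertex of a stochastic game with a reachability objective has a
value: `sup_σ inf_π P_v^{σ,π}(Reach(T)) = inf_π sup_σ P_v^{σ,π}(Reach(T))`. -/
theorem every_vertex_has_value {V : Type*} (G : SGame V) (T : Set V) (v : V) :
    (⨆ σ : G.Strat G.isBox, ⨅ π : G.Strat G.isDiamond, G.reachP σ π T v)
      = ⨅ π : G.Strat G.isDiamond, ⨆ σ : G.Strat G.isBox, G.reachP σ π T v := by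
  refine le_antisymm ?_ ?_
  · -- easy direction: sup inf ≤ inf sup
    refine le_ciInf fun π => ?_
    refine ciSup_le fun σ => ?_
    refine le_trans (SGame.low_le_reachP σ π T v) ?_
    exact le_ciSup (f := fun σ' : G.Strat G.isBox => G.reachP σ' π T v)
      ⟨1, by rintro x ⟨σ', rfl⟩; exact G.reachP_le_one σ' π T v⟩ σ
  · calc (⨅ π : G.Strat G.isDiamond, ⨆ σ : G.Strat G.isBox, G.reachP σ π T v)
        ≤ G.fstar T v := SGame.infsup_le_fstar T v
      _ ≤ G.val T v := G.fstar_le T (SGame.val_preFix T) v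
      _ = _ := rfl
end

section
/- In a finitely-branching stochastic game with reachability objective, for every vertex v and every ε > 0 there exist a strategy σ for player Box and a natural number n such that for every strategy π of player Diamond, the probability of reaching T from v within at most n steps exceeds val(v) − ε. -/
open scoped Classical

section Aux

variable {V : Type*} (G : SGame V) (T : Set V) (hfb : ∀ v, {u | G.edge v u}.Finite)
  (σ : G.Strat G.isBox)

/-- The finite set of successors of `v`. -/
noncomputable def EE (v : V) : Finset V := (hfb v).toFinset

lemma mem_EE {v u : V} : u ∈ EE G hfb v ↔ G.edge v u := Set.Finite.mem_toFinset _

/-- A Dirac (deterministic) strategy, used for nonemptiness. -/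
noncomputable def dirac (own : V → Prop) : G.Strat own where
  f := fun _ v u => if u = Classical.choose (G.total v) then 1 else 0
  nonneg := by intro w v u; split <;> norm_num
  supp := by
    intro w v u _ h
    by_cases hu : u = Classical.choose (G.total v)
    · subst hu; exact Classical.choose_spec (G.total v)
    · simp [hu] at h
  sum_one := by intro w v _; exact tsum_ite_eq _ 1

/-- One-step transition where diamond choices come from a raw function `g`. -/
noncomputable def stepg (g : List V → V → V → ℝ) (w : List V) (v u : V) : ℝ :=
  if G.isBox v then σ.f w v u else if G.isDiamond v then g w v u else G.prob v u

/-- Finite-sum version of `reachN`, as a function of the raw diamond choices. -/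
noncomputable def Phi : ℕ → List V → V → (List V → V → V → ℝ) → ℝ
  | 0, _, v, _ => if v ∈ T then 1 else 0
  | n+1, w, v, g => if v ∈ T then 1 else
      ∑ u ∈ EE G hfb v, stepg G σ g w v u * Phi n (w ++ [v]) u g

/-- The set of raw diamond strategy functions. -/
def AA : Set (List V → V → V → ℝ) :=
  {g | (∀ w v u, g w v u ∈ Set.Icc (0:ℝ) 1) ∧
       (∀ w v u, G.isDiamond v → ¬ G.edge v u → g w v u = 0) ∧
       (∀ w v, G.isDiamond v → ∑ u ∈ EE G hfb v, g w v u = 1)}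

lemma stepg_nonneg {g} (hg : g ∈ AA G hfb) (w : List V) (v u : V) :
    0 ≤ stepg G σ g w v u := by
  unfold stepg; split_ifs with h1 h2
  · exact σ.nonneg w v u
  · exact (hg.1 w v u).1
  · exact G.prob_nonneg v u

lemma stepg_zero {g} (hg : g ∈ AA G hfb) {w : List V} {v u : V} (h : ¬ G.edge v u) :
    stepg G σ g w v u = 0 := by
  unfold stepg; split_ifs with h1 h2
  · by_contra hne; exact h (σ.supp w v u h1 hne)
  · exact hg.2.1 w v u h2 h
  · rcases G.cover v with hb | hd | hc
    · exact absurd hb h1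
    · exact absurd hd h2
    · have := (G.prob_supp v u hc).not.mpr h
      exact le_antisymm (not_lt.1 this) (G.prob_nonneg v u)

lemma stepg_sum {g} (hg : g ∈ AA G hfb) (w : List V) (v : V) :
    ∑ u ∈ EE G hfb v, stepg G σ g w v u = 1 := by
  unfold stepg; split_ifs with h1 h2
  · rw [← tsum_eq_sum (L := SummationFilter.unconditional V) (f := fun u => σ.f w v u) (s := EE G hfb v)
      (fun u hu => by
        by_contra hne; exact hu ((mem_EE G hfb).2 (σ.supp w v u h1 hne)))]
    exact σ.sum_one w v h1
  · exact hg.2.2 w v h2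
  · rcases G.cover v with hb | hd | hc
    · exact absurd hb h1
    · exact absurd hd h2
    · rw [← tsum_eq_sum (L := SummationFilter.unconditional V) (f := fun u => G.prob v u) (s := EE G hfb v)
        (fun u hu => by
          have hne : ¬ G.edge v u := fun he => hu ((mem_EE G hfb).2 he)
          have := (G.prob_supp v u hc).not.mpr hne
          exact le_antisymm (not_lt.1 this) (G.prob_nonneg v u))]
      exact G.prob_sum v hc

lemma Phi_mem {g} (hg : g ∈ AA G hfb) :
    ∀ (n : ℕ) (w : List V) (v : V), Phi G T hfb σ n w v g ∈ Set.Icc (0:ℝ) 1 := by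
  intro n
  induction n with
  | zero => intro w v; unfold Phi; split <;> norm_num
  | succ n ih =>
    intro w v
    unfold Phi
    split
    · norm_num
    · constructor
      · exact Finset.sum_nonneg fun u _ =>
          mul_nonneg (stepg_nonneg G hfb σ hg w v u) (ih (w ++ [v]) u).1
      · calc ∑ u ∈ EE G hfb v, stepg G σ g w v u * Phi G T hfb σ n (w ++ [v]) u g
            ≤ ∑ u ∈ EE G hfb v, stepg G σ g w v u * 1 :=
              Finset.sum_le_sum fun u _ =>
                mul_le_mul_of_nonneg_left (ih (w ++ [v]) u).2 (stepg_nonneg G hfb σ hg w v u)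
          _ = 1 := by simp [stepg_sum G hfb σ hg w v]

lemma Phi_mono {g} (hg : g ∈ AA G hfb) :
    ∀ (n : ℕ) (w : List V) (v : V), Phi G T hfb σ n w v g ≤ Phi G T hfb σ (n+1) w v g := by
  intro n
  induction n with
  | zero =>
    intro w v
    show Phi G T hfb σ 0 w v g ≤ Phi G T hfb σ 1 w v g
    unfold Phi
    split
    · exact le_refl 1
    · exact Finset.sum_nonneg fun u _ =>
        mul_nonneg (stepg_nonneg G hfb σ hg w v u) (Phi_mem G T hfb σ hg 0 (w ++ [v]) u).1
  | succ n ih =>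
    intro w v
    show Phi G T hfb σ (n+1) w v g ≤ Phi G T hfb σ (n+2) w v g
    unfold Phi
    split
    · exact le_refl 1
    · exact Finset.sum_le_sum fun u _ =>
        mul_le_mul_of_nonneg_left (ih (w ++ [v]) u) (stepg_nonneg G hfb σ hg w v u)

lemma ev_cont (w : List V) (v u : V) :
    Continuous fun g : List V → V → V → ℝ => g w v u :=
  (continuous_apply u).comp ((continuous_apply v).comp (continuous_apply w))

lemma stepg_cont (w : List V) (v u : V) :
    Continuous fun g : List V → V → V → ℝ => stepg G σ g w v u := by
  unfold stepg
  split_ifs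
  · exact continuous_const
  · exact ev_cont w v u
  · exact continuous_const

lemma Phi_cont : ∀ (n : ℕ) (w : List V) (v : V),
    Continuous fun g : List V → V → V → ℝ => Phi G T hfb σ n w v g := by
  intro n
  induction n with
  | zero => intro w v; unfold Phi; split <;> exact continuous_const
  | succ n ih =>
    intro w v
    unfold Phi
    split
    · exact continuous_const
    · exact continuous_finset_sum _ fun u _ =>
        (stepg_cont G σ w v u).mul (ih (w ++ [v]) u)

lemma step_zero (π : G.Strat G.isDiamond) {w : List V} {v u : V} (h : ¬ G.edge v u) :
    G.step σ π w v u = 0 := by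
  unfold SGame.step; split_ifs with h1 h2
  · by_contra hne; exact h (σ.supp w v u h1 hne)
  · by_contra hne; exact h (π.supp w v u h2 hne)
  · rcases G.cover v with hb | hd | hc
    · exact absurd hb h1
    · exact absurd hd h2
    · have := (G.prob_supp v u hc).not.mpr h
      exact le_antisymm (not_lt.1 this) (G.prob_nonneg v u)

lemma reachN_eq_Phi (π : G.Strat G.isDiamond) (g : List V → V → V → ℝ)
    (hgπ : ∀ w v u, G.isDiamond v → ¬ G.isBox v → π.f w v u = g w v u) :
    ∀ (n : ℕ) (w : List V) (v : V), G.reachN σ π T n w v = Phi G T hfb σ n w v g := by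
  intro n
  induction n with
  | zero => intro w v; rfl
  | succ n ih =>
    intro w v
    show (if v ∈ T then 1 else ∑' u, G.step σ π w v u * G.reachN σ π T n (w ++ [v]) u)
        = Phi G T hfb σ (n+1) w v g
    unfold Phi
    split
    · rfl
    · rw [tsum_eq_sum (s := EE G hfb v)
        (fun u hu => by
          rw [step_zero G σ π (fun he => hu ((mem_EE G hfb).2 he))]; ring)]
      refine Finset.sum_congr rfl fun u _ => ?_
      rw [ih (w ++ [v]) u]
      congr 1
      unfold SGame.step stepg
      split_ifs with h1 h2
      · rfl
      · exact hgπ w v u h2 h1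
      · rfl

/-- Project a diamond strategy to a raw function in `AA`. -/
noncomputable def toA (π : G.Strat G.isDiamond) : List V → V → V → ℝ :=
  fun w v u => if G.isDiamond v then π.f w v u else 0

lemma toA_mem (π : G.Strat G.isDiamond) : toA G π ∈ AA G hfb := by
  refine ⟨fun w v u => ?_, fun w v u hd he => ?_, fun w v hd => ?_⟩
  · unfold toA
    split_ifs with hd
    · refine ⟨π.nonneg w v u, ?_⟩
      have hs : Summable (fun u => π.f w v u) :=
        summable_of_ne_finset_zero (s := EE G hfb v) fun u hu => by
          by_contra hne; exact hu ((mem_EE G hfb).2 (π.supp w v u hd hne))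
      calc π.f w v u ≤ ∑' u, π.f w v u := Summable.le_tsum hs u fun j _ => π.nonneg w v j
        _ = 1 := π.sum_one w v hd
    · norm_num
  · unfold toA
    rw [if_pos hd]
    by_contra hne; exact he (π.supp w v u hd hne)
  · have h1 : ∑ u ∈ EE G hfb v, toA G π w v u = ∑ u ∈ EE G hfb v, π.f w v u :=
      Finset.sum_congr rfl fun u _ => if_pos hd
    rw [h1, ← tsum_eq_sum (L := SummationFilter.unconditional V) (s := EE G hfb v)
      (fun u hu => by
        by_contra hne; exact hu ((mem_EE G hfb).2 (π.supp w v u hd hne)))]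
    exact π.sum_one w v hd

/-- Build a diamond strategy from a raw function in `AA`. -/
noncomputable def ofA (g : List V → V → V → ℝ) (hg : g ∈ AA G hfb) :
    G.Strat G.isDiamond where
  f := fun w v u => if G.isDiamond v then g w v u
      else if u = Classical.choose (G.total v) then 1 else 0
  nonneg := by
    intro w v u; split_ifs with h1 h2
    · exact (hg.1 w v u).1
    · norm_num
    · norm_num
  supp := by
    intro w v u hd hne
    rw [if_pos hd] at hne
    by_contra he; exact hne (hg.2.1 w v u hd he)
  sum_one := by
    intro w v hd
    have h1 : ∀ u, (if G.isDiamond v then g w v u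
        else if u = Classical.choose (G.total v) then 1 else 0) = g w v u :=
      fun u => if_pos hd
    simp only [h1]
    rw [tsum_eq_sum (s := EE G hfb v)
      (fun u hu => hg.2.1 w v u hd (fun he => hu ((mem_EE G hfb).2 he)))]
    exact hg.2.2 w v hd

lemma ofA_diamond (g : List V → V → V → ℝ) (hg : g ∈ AA G hfb) :
    ∀ w v u, G.isDiamond v → ¬ G.isBox v → (ofA G hfb g hg).f w v u = g w v u :=
  fun w v u hd _ => if_pos hd

lemma toA_diamond (π : G.Strat G.isDiamond) :
    ∀ w v u, G.isDiamond v → ¬ G.isBox v → π.f w v u = toA G π w v u :=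
  fun w v u hd _ => (if_pos hd).symm

lemma AA_isClosed : IsClosed (AA G hfb) := by
  have h1 : AA G hfb =
      (⋂ w, ⋂ v, ⋂ u, {g : List V → V → V → ℝ | g w v u ∈ Set.Icc (0:ℝ) 1}) ∩
      ((⋂ w, ⋂ v, ⋂ u,
          {g : List V → V → V → ℝ | G.isDiamond v → ¬ G.edge v u → g w v u = 0}) ∩
       (⋂ w, ⋂ v,
          {g : List V → V → V → ℝ | G.isDiamond v → ∑ u ∈ EE G hfb v, g w v u = 1})) := by
    ext g
    simp only [AA, Set.mem_setOf_eq, Set.mem_inter_iff, Set.mem_iInter]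
  rw [h1]
  refine IsClosed.inter ?_ (IsClosed.inter ?_ ?_)
  · exact isClosed_iInter fun w => isClosed_iInter fun v => isClosed_iInter fun u =>
      IsClosed.preimage (ev_cont w v u) isClosed_Icc
  · refine isClosed_iInter fun w => isClosed_iInter fun v => isClosed_iInter fun u => ?_
    by_cases h : G.isDiamond v ∧ ¬ G.edge v u
    · have he : {g : List V → V → V → ℝ | G.isDiamond v → ¬ G.edge v u → g w v u = 0}
          = (fun g : List V → V → V → ℝ => g w v u) ⁻¹' {0} := by
        ext g; simp [h.1, h.2]
      rw [he]; exact IsClosed.preimage (ev_cont w v u) isClosed_singleton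
    · have he : {g : List V → V → V → ℝ | G.isDiamond v → ¬ G.edge v u → g w v u = 0}
          = Set.univ := by
        ext g; simp only [Set.mem_setOf_eq, Set.mem_univ, iff_true]
        intro hd hne; exact absurd ⟨hd, hne⟩ h
      rw [he]; exact isClosed_univ
  · refine isClosed_iInter fun w => isClosed_iInter fun v => ?_
    by_cases hd : G.isDiamond v
    · have he : {g : List V → V → V → ℝ | G.isDiamond v → ∑ u ∈ EE G hfb v, g w v u = 1}
          = (fun g : List V → V → V → ℝ => ∑ u ∈ EE G hfb v, g w v u) ⁻¹' {1} := by
        ext g; simp [hd]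
      rw [he]
      exact IsClosed.preimage (continuous_finset_sum _ fun u _ => ev_cont w v u)
        isClosed_singleton
    · have he : {g : List V → V → V → ℝ | G.isDiamond v → ∑ u ∈ EE G hfb v, g w v u = 1}
          = Set.univ := by
        ext g; simp [hd]
      rw [he]; exact isClosed_univ

lemma AA_isCompact : IsCompact (AA G hfb) := by
  have hK : IsCompact (Set.univ.pi fun _ : List V =>
      Set.univ.pi fun _ : V => Set.univ.pi fun _ : V => Set.Icc (0:ℝ) 1) :=
    isCompact_univ_pi fun _ => isCompact_univ_pi fun _ => isCompact_univ_pi fun _ =>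
      isCompact_Icc
  refine IsCompact.of_isClosed_subset hK (AA_isClosed G hfb) ?_
  intro g hg
  rw [Set.mem_univ_pi]
  intro w
  rw [Set.mem_univ_pi]
  intro v
  rw [Set.mem_univ_pi]
  intro u
  exact hg.1 w v u

end Aux

/-- In a finitely-branching stochastic game with reachability objective, for
every vertex `v` and every `ε > 0` there are a strategy `σ` of player Box and
a bound `n` such that against every strategy `π` of player Diamond, the
probability of reaching `T` from `v` within at most `n` steps exceeds
`val(v) - ε`. -/
theorem box_bounded_step_eps_optimal {V : Type*} (G : SGame V) (T : Set V)
    (hfb : ∀ v, {u | G.edge v u}.Finite) (v : V) :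
    ∀ ε : ℝ, 0 < ε → ∃ (σ : G.Strat G.isBox) (n : ℕ),
      ∀ π : G.Strat G.isDiamond, G.val T v - ε < G.reachN σ π T n [] v := by
  intro ε hε
  haveI : Nonempty (G.Strat G.isBox) := ⟨dirac G G.isBox⟩
  haveI : Nonempty (G.Strat G.isDiamond) := ⟨dirac G G.isDiamond⟩
  have hval : G.val T v - ε/2 < G.val T v := by linarith
  obtain ⟨σ, hσ⟩ := exists_lt_of_lt_ciSup
    (show G.val T v - ε/2 < ⨆ σ : G.Strat G.isBox, ⨅ π : G.Strat G.isDiamond,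
      G.reachP σ π T v from hval)
  set μ : ℕ → ℝ := fun n => sInf (Phi G T hfb σ n [] v '' AA G hfb) with hμdef
  set g₀ : List V → V → V → ℝ := toA G (dirac G G.isDiamond) with hg₀def
  have hg₀ : g₀ ∈ AA G hfb := toA_mem G hfb _
  have hAne : (AA G hfb).Nonempty := ⟨g₀, hg₀⟩
  have hbddB : ∀ n, BddBelow (Phi G T hfb σ n [] v '' AA G hfb) := by
    intro n
    refine ⟨0, ?_⟩
    rintro x ⟨g, hg, rfl⟩
    exact (Phi_mem G T hfb σ hg n [] v).1
  have hμ1 : ∀ n, μ n ≤ 1 := fun n =>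
    le_trans (csInf_le (hbddB n) (Set.mem_image_of_mem _ hg₀))
      (Phi_mem G T hfb σ hg₀ n [] v).2
  have hLbdd : BddAbove (Set.range μ) := ⟨1, by rintro x ⟨n, rfl⟩; exact hμ1 n⟩
  set L : ℝ := ⨆ n, μ n with hLdef
  have hμL : ∀ n, μ n ≤ L := fun n => le_ciSup hLbdd n
  set C : ℕ → Set (List V → V → V → ℝ) :=
    fun n => AA G hfb ∩ {g | Phi G T hfb σ n [] v g ≤ L} with hCdef
  have hCsub : ∀ n, C (n+1) ⊆ C n := by
    rintro n g ⟨hgA, hgle⟩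
    exact ⟨hgA, le_trans (Phi_mono G T hfb σ hgA n [] v) hgle⟩
  have hCne : ∀ n, (C n).Nonempty := by
    intro n
    obtain ⟨g, hgA, hmin⟩ := (AA_isCompact G hfb).exists_isMinOn hAne
      (Phi_cont G T hfb σ n [] v).continuousOn
    refine ⟨g, hgA, ?_⟩
    have h1 : Phi G T hfb σ n [] v g ≤ μ n := by
      refine le_csInf ⟨_, Set.mem_image_of_mem _ hgA⟩ ?_
      rintro x ⟨g', hg', rfl⟩
      exact hmin hg'
    exact le_trans h1 (hμL n)
  have hCclosed : ∀ n, IsClosed (C n) := fun n =>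
    (AA_isClosed G hfb).inter (isClosed_le (Phi_cont G T hfb σ n [] v) continuous_const)
  have hC0 : IsCompact (C 0) :=
    IsCompact.of_isClosed_subset (AA_isCompact G hfb) (hCclosed 0) Set.inter_subset_left
  obtain ⟨gs, hgs⟩ := IsCompact.nonempty_iInter_of_sequence_nonempty_isCompact_isClosed
    C hCsub hCne hC0 hCclosed
  simp only [Set.mem_iInter] at hgs
  have hgsA : gs ∈ AA G hfb := (hgs 0).1
  set πs : G.Strat G.isDiamond := ofA G hfb gs hgsA with hπsdef
  have hreach : ∀ (n : ℕ) (w : List V) (v' : V),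
      G.reachN σ πs T n w v' = Phi G T hfb σ n w v' gs :=
    reachN_eq_Phi G T hfb σ πs gs (ofA_diamond G hfb gs hgsA)
  have hP : G.reachP σ πs T v ≤ L := ciSup_le fun n => by
    show G.reachN σ πs T n [] v ≤ L
    rw [hreach n [] v]
    exact (hgs n).2
  have hreachP_nonneg : ∀ π : G.Strat G.isDiamond, 0 ≤ G.reachP σ π T v := by
    intro π
    have hb : BddAbove (Set.range fun n => G.reachN σ π T n [] v) := by
      refine ⟨1, ?_⟩
      rintro x ⟨n, rfl⟩
      show G.reachN σ π T n [] v ≤ 1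
      rw [reachN_eq_Phi G T hfb σ π (toA G π) (toA_diamond G π) n [] v]
      exact (Phi_mem G T hfb σ (toA_mem G hfb π) n [] v).2
    have h0 : (0:ℝ) ≤ G.reachN σ π T 0 [] v := by
      show (0:ℝ) ≤ if v ∈ T then 1 else 0
      split <;> norm_num
    exact le_trans h0 (le_ciSup hb 0)
  have hinf : (⨅ π : G.Strat G.isDiamond, G.reachP σ π T v) ≤ G.reachP σ πs T v :=
    ciInf_le ⟨0, by rintro x ⟨π, rfl⟩; exact hreachP_nonneg π⟩ πs
  have hlt : G.val T v - ε/2 < L := lt_of_lt_of_le hσ (le_trans hinf hP)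
  obtain ⟨n, hn⟩ := exists_lt_of_lt_ciSup
    (show G.val T v - ε/2 < ⨆ n, μ n from hlt)
  refine ⟨σ, n, fun π => ?_⟩
  have h1 : μ n ≤ Phi G T hfb σ n [] v (toA G π) :=
    csInf_le (hbddB n) (Set.mem_image_of_mem _ (toA_mem G hfb π))
  rw [reachN_eq_Phi G T hfb σ π (toA G π) (toA_diamond G π) n [] v]
  linarith
end
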